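/- If a finite simple graph G on n vertices has an odd cycle transversal S of size k, then the graph G² has a vertex cover of size n + k. (Forward direction of Lemma 1.) -/

import Mathlib

/-- The graph `G²` on vertex set `V × Bool` (copy 1 = `false`, copy 2 = `true`):
edges `{(u,i),(v,i)}` for every edge `{u,v}` of `G`, plus `{(v,1),(v,2)}` for every `v`. -/
def doubledGraph {V : Type*} (G : SimpleGraph V) : SimpleGraph (V × Bool) where
  Adj x y := (x.2 = y.2 ∧ G.Adj x.1 y.1) ∨ (x.1 = y.1 ∧ x.2 ≠ y.2)
  symm := ⟨by
    rintro ⟨u, i⟩ ⟨v, j⟩ (⟨h1, h2⟩ | ⟨h1, h2⟩)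
    · exact Or.inl ⟨h1.symm, h2.symm⟩
    · exact Or.inr ⟨h1.symm, h2.symm⟩⟩
  loopless := ⟨by
    rintro ⟨u, i⟩ (⟨_, h⟩ | ⟨_, h⟩)
    · exact G.loopless.irrefl u h
    · exact h rfl⟩

/-- `X` is a vertex cover of `G`: it contains an endpoint of every edge. -/
def IsVertexCover {α : Type*} (G : SimpleGraph α) (X : Set α) : Prop :=
  ∀ ⦃u v : α⦄, G.Adj u v → u ∈ X ∨ v ∈ X

/-- Forward direction of Lemma 1: if a finite simple graph `G` on `n` vertices has an odd
cycle transversal `S` of size `k` (i.e. `G` induced on `Sᶜ` is bipartite), then `G²` has a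
vertex cover of size `n + k`. -/
theorem stmt0 {V : Type*} [Fintype V] (G : SimpleGraph V) (S : Set V) (k : ℕ)
    (hOCT : (G.induce (Sᶜ : Set V)).Colorable 2) (hcard : S.ncard = k) :
    ∃ X : Set (V × Bool), IsVertexCover (doubledGraph G) X ∧
      X.ncard = Fintype.card V + k := by
  classical
  obtain ⟨c⟩ := hOCT
  let f : V → Bool := fun v => if h : v ∈ (Sᶜ : Set V) then decide (c ⟨v, h⟩ = 1) else false
  let A : Set (V × Bool) := (fun v => (v, false)) '' S
  let B : Set (V × Bool) := (fun v => (v, true)) '' S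
  let C : Set (V × Bool) := (fun v => (v, f v)) '' (Sᶜ : Set V)
  have hAmem : ∀ v ∈ S, (v, false) ∈ A := fun v hv => ⟨v, hv, rfl⟩
  have hBmem : ∀ v ∈ S, (v, true) ∈ B := fun v hv => ⟨v, hv, rfl⟩
  have hCmem : ∀ v ∈ (Sᶜ : Set V), (v, f v) ∈ C := fun v hv => ⟨v, hv, rfl⟩
  have hSmem : ∀ v ∈ S, ∀ i : Bool, (v, i) ∈ A ∪ B ∪ C := by
    intro v hv i
    cases i
    · exact Or.inl (Or.inl (hAmem v hv))
    · exact Or.inl (Or.inr (hBmem v hv))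
  have hfne : ∀ u v, ∀ (hu : u ∈ (Sᶜ : Set V)) (hv : v ∈ (Sᶜ : Set V)),
      G.Adj u v → f u ≠ f v := by
    intro u v hu hv hadj
    have hcne : c ⟨u, hu⟩ ≠ c ⟨v, hv⟩ := c.valid hadj
    simp only [f, dif_pos hu, dif_pos hv]
    intro h
    have hiff : (c ⟨u, hu⟩ = 1) ↔ (c ⟨v, hv⟩ = 1) := by simpa using h
    have h0 : ∀ x : Fin 2, x ≠ 1 → x = 0 := by decide
    apply hcne
    by_cases h1 : c ⟨u, hu⟩ = 1
    · rw [h1, hiff.mp h1]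
    · rw [h0 _ h1, h0 _ (fun hv1 => h1 (hiff.mpr hv1))]
  refine ⟨A ∪ B ∪ C, ?_, ?_⟩
  · rintro ⟨u, i⟩ ⟨v, j⟩ (⟨hij, hadj⟩ | ⟨huv, hij⟩)
    · dsimp at hij hadj
      by_cases hu : u ∈ S
      · exact Or.inl (hSmem u hu i)
      · by_cases hv : v ∈ S
        · exact Or.inr (hSmem v hv j)
        · have hne := hfne u v hu hv hadj
          subst hij
          by_cases h : f u = i
          · left; right
            have := hCmem u hu; rwa [h] at this
          · right; right
            have hfv : f v = i := by
              cases hfu : f u <;> cases hfv : f v <;> cases i <;> simp_all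
            have := hCmem v hv; rwa [hfv] at this
    · dsimp at huv hij
      subst huv
      by_cases hu : u ∈ S
      · exact Or.inl (hSmem u hu i)
      · by_cases h : f u = i
        · left; right
          have := hCmem u hu; rwa [h] at this
        · right; right
          have hfj : f u = j := by cases hfu : f u <;> cases i <;> cases j <;> simp_all
          have := hCmem u hu; rwa [hfj] at this
  · have hdisjAB : Disjoint A B := by
      rw [Set.disjoint_left]
      rintro p ⟨u, hu, rfl⟩ ⟨v, hv, h⟩
      simp at h
    have hdisjABC : Disjoint (A ∪ B) C := by
      rw [Set.disjoint_left]
      rintro p (⟨u, hu, rfl⟩ | ⟨u, hu, rfl⟩) ⟨v, hv, h⟩ <;>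
        · have : v = u := congrArg Prod.fst h
          subst this; exact hv hu
    have hinj1 : Set.InjOn (fun v => (v, false)) S :=
      fun a _ b _ h => congrArg Prod.fst h
    have hinj2 : Set.InjOn (fun v => (v, true)) S :=
      fun a _ b _ h => congrArg Prod.fst h
    have hinj3 : Set.InjOn (fun v => (v, f v)) (Sᶜ : Set V) :=
      fun a _ b _ h => congrArg Prod.fst h
    rw [Set.ncard_union_eq hdisjABC (Set.toFinite _) (Set.toFinite _),
        Set.ncard_union_eq hdisjAB (Set.toFinite _) (Set.toFinite _),
        Set.ncard_image_of_injOn hinj1, Set.ncard_image_of_injOn hinj2,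
        Set.ncard_image_of_injOn hinj3]
    have hcompl := Set.ncard_add_ncard_compl S
    rw [Nat.card_eq_fintype_card] at hcompl
    omega
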